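/- Let a : ℝ → ℝ be measurable with ā⁻¹ ≤ a ≤ ā for positive constants (uniform ellipticity and boundedness), and let q̄^y_t(x,z) = g(a(y)t, z-x) - g(a(y)t, z+x-2L) for x, z ≤ L. Then for any β ∈ [0,1], there exist constants C, c > 1 such that for all x, z ≤ L and t > 0: |q̄^y_t(x,z)| ≤ C · min(|L - z|^β / t^{β/2}, 1) · g(c t, x - z). -/

import Mathlib

/-- Gaussian heat kernel `g(c,u) = (2πc)^{-1/2} exp(-u²/(2c))`. -/
noncomputable def gk (c u : ℝ) : ℝ :=
  (2 * Real.pi * c) ^ (-(1 : ℝ) / 2) * Real.exp (-u ^ 2 / (2 * c))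

open Real

lemma gk_eq {c : ℝ} (hc : 0 < c) (u : ℝ) :
    gk c u = (Real.sqrt (2 * π * c))⁻¹ * Real.exp (-u ^ 2 / (2 * c)) := by
  rw [gk, show (-(1:ℝ)/2) = -(1/2) by ring, Real.rpow_neg (by positivity),
    ← Real.sqrt_eq_rpow]

lemma gk_pos {c : ℝ} (hc : 0 < c) (u : ℝ) : 0 < gk c u := by
  rw [gk_eq hc]
  have : 0 < Real.sqrt (2 * π * c) := Real.sqrt_pos.2 (by positivity)
  positivity

lemma sqrt_pref {s c : ℝ} (hs : 0 < s) (hc : 0 < c) :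
    Real.sqrt (c / s) * (Real.sqrt (2 * π * c))⁻¹ = (Real.sqrt (2 * π * s))⁻¹ := by
  rw [← Real.sqrt_inv, ← Real.sqrt_mul (by positivity)]
  have hπ := Real.pi_pos
  rw [← Real.sqrt_inv]; congr 1; field_simp

lemma exp_term_le {s c u : ℝ} (hs : 0 < s) (hsc : s ≤ c) :
    Real.exp (-u ^ 2 / (2 * s)) ≤ Real.exp (-u ^ 2 / (2 * c)) := by
  apply Real.exp_le_exp.2
  rw [neg_div, neg_div, neg_le_neg_iff]
  exact div_le_div_of_nonneg_left (sq_nonneg u) (by linarith) (by linarith)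

lemma gk_le_gk {s c : ℝ} (hs : 0 < s) (hsc : s ≤ c) (u : ℝ) :
    gk s u ≤ Real.sqrt (c / s) * gk c u := by
  have hc : 0 < c := lt_of_lt_of_le hs hsc
  rw [gk_eq hs, gk_eq hc, ← mul_assoc, sqrt_pref hs hc]
  exact mul_le_mul_of_nonneg_left (exp_term_le hs hsc) (by positivity)

lemma gk_mono {s u v : ℝ} (hs : 0 < s) (h : u ^ 2 ≤ v ^ 2) : gk s v ≤ gk s u := by
  rw [gk_eq hs, gk_eq hs]
  have he : Real.exp (-v ^ 2 / (2 * s)) ≤ Real.exp (-u ^ 2 / (2 * s)) := by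
    apply Real.exp_le_exp.2
    apply div_le_div_of_nonneg_right (by linarith) (by linarith)
  exact mul_le_mul_of_nonneg_left he (by positivity)

lemma spacetime {s : ℝ} (hs : 0 < s) (w : ℝ) :
    |w| * Real.exp (-w ^ 2 / (4 * s)) ≤ Real.sqrt s := by
  have hu : 0 < Real.sqrt s := Real.sqrt_pos.2 hs
  have h1 : Real.sqrt s * Real.sqrt s = s := Real.mul_self_sqrt hs.le
  rw [show -w ^ 2 / (4 * s) = -(w ^ 2 / (4 * s)) by ring, Real.exp_neg,
    mul_inv_le_iff₀' (Real.exp_pos _)]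
  have h2 : 1 + w ^ 2 / (4 * s) ≤ Real.exp (w ^ 2 / (4 * s)) := by
    linarith [Real.add_one_le_exp (w ^ 2 / (4 * s))]
  have key : 4 * s * |w| ≤ 4 * s * Real.sqrt s + Real.sqrt s * w ^ 2 := by
    nlinarith [sq_nonneg (2 * Real.sqrt s - |w|), sq_abs w, hu.le]
  have h3 : |w| ≤ Real.sqrt s * (1 + w ^ 2 / (4 * s)) := by
    rw [show Real.sqrt s * (1 + w ^ 2 / (4 * s))
        = (4 * s * Real.sqrt s + Real.sqrt s * w ^ 2) / (4 * s) by field_simp,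
      le_div_iff₀ (by linarith)]
    linarith
  calc |w| ≤ Real.sqrt s * (1 + w ^ 2 / (4 * s)) := h3
    _ ≤ Real.sqrt s * Real.exp (w ^ 2 / (4 * s)) :=
      mul_le_mul_of_nonneg_left h2 hu.le
    _ = Real.exp (w ^ 2 / (4 * s)) * Real.sqrt s := mul_comm _ _

set_option maxHeartbeats 1000000 in
lemma main_core {a₁ c s t L x z K1 : ℝ} (ha₁ : 0 < a₁) (ht : 0 < t)
    (hs1 : a₁ * t ≤ s) (h2s : 2 * s ≤ c * t) (hK1 : Real.sqrt (c * t / s) ≤ K1)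
    (hx : x ≤ L) (hz : z ≤ L) :
    gk s (z - x) - gk s (z + x - 2 * L)
      ≤ K1 * (2 / a₁ + 2 / Real.sqrt a₁ + 1) * min ((L - z) / Real.sqrt t) 1
        * gk (c * t) (x - z) := by
  have hs : 0 < s := lt_of_lt_of_le (by positivity) hs1
  have hct : 0 < c * t := by linarith
  have hst : s ≤ c * t := by linarith
  have hδ : 0 ≤ L - z := by linarith
  have hsqrt_t : 0 < Real.sqrt t := Real.sqrt_pos.2 ht
  have htt : Real.sqrt t * Real.sqrt t = t := Real.mul_self_sqrt ht.le
  have hK1nn : 0 ≤ K1 := le_trans (Real.sqrt_nonneg _) hK1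
  have hgct : 0 < gk (c * t) (x - z) := gk_pos hct _
  have htriv : ∀ u, gk s u ≤ K1 * gk (c * t) u := fun u =>
    le_trans (gk_le_gk hs hst u)
      (mul_le_mul_of_nonneg_right hK1 (gk_pos hct u).le)
  set δ := L - z with hδdef
  set w := x - z with hwdef
  -- rewrite arguments
  have harg1 : gk s (z - x) = gk s w := by
    rw [gk, gk, show (z - x) ^ 2 = w ^ 2 by rw [hwdef]; ring]
  have harg2 : z + x - 2 * L = w - 2 * δ := by rw [hwdef, hδdef]; ring
  rw [harg1, harg2]
  have hfac : (1 : ℝ) ≤ 2 / a₁ + 2 / Real.sqrt a₁ + 1 := by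
    have h1 : 0 ≤ 2 / a₁ := by positivity
    have h2 : 0 ≤ 2 / Real.sqrt a₁ := by positivity
    linarith
  have hid : δ - w = L - x := by rw [hwdef, hδdef]; ring
  have h4 : 0 ≤ δ * (δ - w) := by rw [hid]; exact mul_nonneg hδ (by linarith)
  have hsq : w ^ 2 ≤ (w - 2 * δ) ^ 2 := by nlinarith [h4]
  rcases le_or_gt δ (Real.sqrt t) with hcase | hcase
  · -- near-boundary case
    rw [min_eq_left ((div_le_one hsqrt_t).2 hcase)]
    set A := (Real.sqrt (2 * π * s))⁻¹ with hAdef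
    have hA : 0 ≤ A := by positivity
    set E2 := Real.exp (-w ^ 2 / (2 * s)) with hE2def
    set E4 := Real.exp (-w ^ 2 / (4 * s)) with hE4def
    have hE2 : 0 ≤ E2 := (Real.exp_pos _).le
    have hE4 : 0 ≤ E4 := (Real.exp_pos _).le
    set d := ((w - 2 * δ) ^ 2 - w ^ 2) / (2 * s) with hddef
    have hd0 : 0 ≤ d := div_nonneg (by linarith) (by linarith)
    have hsub : gk s w - gk s (w - 2 * δ) ≤ A * E2 * d := by
      rw [gk_eq hs, gk_eq hs]
      have hexp : Real.exp (-(w - 2 * δ) ^ 2 / (2 * s)) = E2 * Real.exp (-d) := by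
        rw [hE2def, ← Real.exp_add]
        congr 1
        rw [hddef]
        field_simp
        ring
      rw [hexp]
      have h1e : 1 - d ≤ Real.exp (-d) := by linarith [Real.add_one_le_exp (-d)]
      calc A * E2 - A * (E2 * Real.exp (-d)) = A * E2 * (1 - Real.exp (-d)) := by ring
        _ ≤ A * E2 * d := mul_le_mul_of_nonneg_left (by linarith) (mul_nonneg hA hE2)
    have hd_le : d ≤ 2 * δ ^ 2 / s + 2 * δ * |w| / s := by
      have hwabs : δ * (-w) ≤ δ * |w| := mul_le_mul_of_nonneg_left (neg_le_abs w) hδ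
      calc d = (2 * δ ^ 2 - 2 * δ * w) / s := by rw [hddef]; field_simp; ring
        _ ≤ (2 * δ ^ 2 + 2 * δ * |w|) / s := by
          apply div_le_div_of_nonneg_right (by linarith) hs.le
        _ = 2 * δ ^ 2 / s + 2 * δ * |w| / s := by ring
    -- Term A bound
    have hA1 : 2 * δ ^ 2 / s ≤ 2 / a₁ * (δ / Real.sqrt t) := by
      calc 2 * δ ^ 2 / s ≤ 2 * δ ^ 2 / (a₁ * t) :=
            div_le_div_of_nonneg_left (by positivity) (by positivity) hs1
        _ ≤ 2 * (δ * Real.sqrt t) / (a₁ * t) := by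
            apply div_le_div_of_nonneg_right _ (by positivity)
            nlinarith [mul_le_mul_of_nonneg_left hcase hδ]
        _ = 2 / a₁ * (δ / Real.sqrt t) := by
            field_simp
            linear_combination (L - z) * htt
    have hTA : A * E2 * (2 * δ ^ 2 / s)
        ≤ 2 / a₁ * (δ / Real.sqrt t) * (K1 * gk (c * t) w) := by
      have h1 : A * E2 = gk s w := (gk_eq hs w).symm
      calc A * E2 * (2 * δ ^ 2 / s) = (2 * δ ^ 2 / s) * (A * E2) := by ring
        _ ≤ (2 / a₁ * (δ / Real.sqrt t)) * (K1 * gk (c * t) w) := by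
            apply mul_le_mul hA1 (h1 ▸ htriv w) (by rw [h1]; exact (gk_pos hs w).le)
              (mul_nonneg (by positivity) (div_nonneg hδ hsqrt_t.le))
    -- Term B bound
    have hE2split : E2 = E4 * E4 := by
      rw [hE2def, hE4def, ← Real.exp_add]; congr 1; ring
    have hstw : |w| * E4 ≤ Real.sqrt s := spacetime hs w
    have hAE4 : A * E4 ≤ K1 * gk (c * t) w := by
      have hexp4 : E4 ≤ Real.exp (-w ^ 2 / (2 * (c * t))) := by
        rw [hE4def, show (4 : ℝ) * s = 2 * (2 * s) by ring]
        exact exp_term_le (by linarith) h2s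
      have hApref : A ≤ K1 * (Real.sqrt (2 * π * (c * t)))⁻¹ := by
        rw [hAdef, ← sqrt_pref hs hct]
        exact mul_le_mul_of_nonneg_right hK1 (by positivity)
      calc A * E4 ≤ (K1 * (Real.sqrt (2 * π * (c * t)))⁻¹)
            * Real.exp (-w ^ 2 / (2 * (c * t))) :=
          mul_le_mul hApref hexp4 hE4 (mul_nonneg hK1nn (by positivity))
        _ = K1 * gk (c * t) w := by rw [gk_eq hct, mul_assoc]
    have hB1 : 2 * δ / Real.sqrt s ≤ 2 / Real.sqrt a₁ * (δ / Real.sqrt t) := by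
      have hss : Real.sqrt a₁ * Real.sqrt t ≤ Real.sqrt s := by
        rw [← Real.sqrt_mul ha₁.le]
        exact Real.sqrt_le_sqrt hs1
      have ha₁s : 0 < Real.sqrt a₁ := Real.sqrt_pos.2 ha₁
      have hss0 : 0 < Real.sqrt s := Real.sqrt_pos.2 hs
      rw [show 2 / Real.sqrt a₁ * (δ / Real.sqrt t)
          = 2 * δ / (Real.sqrt a₁ * Real.sqrt t) by field_simp]
      exact div_le_div_of_nonneg_left (by linarith) (by positivity) hss
    have hTB : A * E2 * (2 * δ * |w| / s)
        ≤ 2 / Real.sqrt a₁ * (δ / Real.sqrt t) * (K1 * gk (c * t) w) := by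
      have hss0 : 0 < Real.sqrt s := Real.sqrt_pos.2 hs
      have hss : Real.sqrt s * Real.sqrt s = s := Real.mul_self_sqrt hs.le
      have step1 : A * E2 * (2 * δ * |w| / s)
          = (2 * δ / s) * (|w| * E4) * (A * E4) := by
        rw [hE2split]; ring
      have step2 : (2 * δ / s) * (|w| * E4) * (A * E4)
          ≤ (2 * δ / s) * Real.sqrt s * (A * E4) := by
        apply mul_le_mul_of_nonneg_right _ (mul_nonneg hA hE4)
        exact mul_le_mul_of_nonneg_left hstw (div_nonneg (by linarith) hs.le)
      have step3 : (2 * δ / s) * Real.sqrt s = 2 * δ / Real.sqrt s := by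
        rw [div_mul_eq_mul_div, div_eq_div_iff hs.ne' hss0.ne', mul_assoc, hss]
      calc A * E2 * (2 * δ * |w| / s)
          = (2 * δ / s) * (|w| * E4) * (A * E4) := step1
        _ ≤ (2 * δ / s) * Real.sqrt s * (A * E4) := step2
        _ = (2 * δ / Real.sqrt s) * (A * E4) := by rw [step3]
        _ ≤ (2 / Real.sqrt a₁ * (δ / Real.sqrt t)) * (K1 * gk (c * t) w) :=
          mul_le_mul hB1 hAE4 (mul_nonneg hA hE4) (mul_nonneg (by positivity) (div_nonneg hδ hsqrt_t.le))
    -- combine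
    have hdist : A * E2 * d ≤ A * E2 * (2 * δ ^ 2 / s) + A * E2 * (2 * δ * |w| / s) := by
      have h := mul_le_mul_of_nonneg_left hd_le (mul_nonneg hA hE2)
      rw [mul_add] at h
      linarith [h]
    have hsum : A * E2 * (2 * δ ^ 2 / s) + A * E2 * (2 * δ * |w| / s)
        ≤ (2 / a₁ + 2 / Real.sqrt a₁) * (δ / Real.sqrt t) * (K1 * gk (c * t) w) := by
      have h := add_le_add hTA hTB
      have heq : (2 / a₁ + 2 / Real.sqrt a₁) * (δ / Real.sqrt t) * (K1 * gk (c * t) w)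
          = 2 / a₁ * (δ / Real.sqrt t) * (K1 * gk (c * t) w)
            + 2 / Real.sqrt a₁ * (δ / Real.sqrt t) * (K1 * gk (c * t) w) := by ring
      linarith [h]
    have hlast : (2 / a₁ + 2 / Real.sqrt a₁) * (δ / Real.sqrt t) * (K1 * gk (c * t) w)
        ≤ K1 * (2 / a₁ + 2 / Real.sqrt a₁ + 1) * (δ / Real.sqrt t) * gk (c * t) w := by
      have h0 : 0 ≤ K1 * ((δ / Real.sqrt t) * gk (c * t) w) :=
        mul_nonneg hK1nn (mul_nonneg (div_nonneg hδ hsqrt_t.le) hgct.le)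
      have heq : K1 * (2 / a₁ + 2 / Real.sqrt a₁ + 1) * (δ / Real.sqrt t) * gk (c * t) w
          = (2 / a₁ + 2 / Real.sqrt a₁) * (δ / Real.sqrt t) * (K1 * gk (c * t) w)
            + K1 * ((δ / Real.sqrt t) * gk (c * t) w) := by ring
      linarith
    calc gk s w - gk s (w - 2 * δ) ≤ A * E2 * d := hsub
      _ ≤ A * E2 * (2 * δ ^ 2 / s) + A * E2 * (2 * δ * |w| / s) := hdist
      _ ≤ (2 / a₁ + 2 / Real.sqrt a₁) * (δ / Real.sqrt t) * (K1 * gk (c * t) w) := hsum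
      _ ≤ K1 * (2 / a₁ + 2 / Real.sqrt a₁ + 1) * (δ / Real.sqrt t) * gk (c * t) w := hlast
  · -- far case: min = 1
    rw [min_eq_right ((one_le_div hsqrt_t).2 hcase.le)]
    have h1 : gk s w - gk s (w - 2 * δ) ≤ gk s w := by
      linarith [gk_pos hs (w - 2 * δ)]
    calc gk s w - gk s (w - 2 * δ) ≤ gk s w := h1
      _ ≤ K1 * gk (c * t) w := htriv w
      _ ≤ K1 * gk (c * t) w * (2 / a₁ + 2 / Real.sqrt a₁ + 1) :=
          le_mul_of_one_le_right (mul_nonneg hK1nn hgct.le) hfac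
      _ = K1 * (2 / a₁ + 2 / Real.sqrt a₁ + 1) * 1 * gk (c * t) w := by ring

set_option maxHeartbeats 1000000 in
/-- For a measurable, bounded and uniformly elliptic diffusion coefficient `a`
and the frozen killed Gaussian kernel
`q̄^y_t(x,z) = g(a(y)t, z-x) - g(a(y)t, z+x-2L)`, for any `β ∈ [0,1]` there are
constants `C, c > 1` with
`|q̄^y_t(x,z)| ≤ C min(|L-z|^β / t^{β/2}, 1) g(ct, x-z)` for all `x, z ≤ L`, `t > 0`. -/
theorem killed_kernel_boundary_estimate (L a₁ a₂ : ℝ) (a : ℝ → ℝ)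
    (ha_meas : Measurable a) (ha₁ : 0 < a₁)
    (hell : ∀ y, a₁ ≤ a y ∧ a y ≤ a₂)
    (β : ℝ) (hβ : β ∈ Set.Icc (0 : ℝ) 1) :
    ∃ C c : ℝ, 1 < C ∧ 1 < c ∧
      ∀ y x z t : ℝ, x ≤ L → z ≤ L → 0 < t →
        |gk (a y * t) (z - x) - gk (a y * t) (z + x - 2 * L)|
          ≤ C * min (|L - z| ^ β / t ^ (β / 2)) 1 * gk (c * t) (x - z) := by
  obtain ⟨hβ0, hβ1⟩ := hβ
  have ha₂ : 0 < a₂ := lt_of_lt_of_le ha₁ (le_trans (hell 0).1 (hell 0).2)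
  refine ⟨Real.sqrt ((2 * a₂ + 2) / a₁) * (2 / a₁ + 2 / Real.sqrt a₁ + 1) + 1,
    2 * a₂ + 2, ?_, by linarith, ?_⟩
  · have h1 : 0 < Real.sqrt ((2 * a₂ + 2) / a₁) := Real.sqrt_pos.2 (by positivity)
    have h2 : (0:ℝ) < 2 / a₁ + 2 / Real.sqrt a₁ + 1 := by positivity
    nlinarith [mul_pos h1 h2]
  intro y x z t hx hz ht
  have hc0 : (0:ℝ) < 2 * a₂ + 2 := by linarith
  have hs1 : a₁ * t ≤ a y * t := mul_le_mul_of_nonneg_right (hell y).1 ht.le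
  have hs : 0 < a y * t := lt_of_lt_of_le (by positivity) hs1
  have hs2 : a y * t ≤ a₂ * t := mul_le_mul_of_nonneg_right (hell y).2 ht.le
  have h2s : 2 * (a y * t) ≤ (2 * a₂ + 2) * t := by nlinarith [hs2, ht.le]
  have hK1 : Real.sqrt ((2 * a₂ + 2) * t / (a y * t))
      ≤ Real.sqrt ((2 * a₂ + 2) / a₁) := by
    apply Real.sqrt_le_sqrt
    rw [div_le_div_iff₀ hs ha₁]
    nlinarith [mul_le_mul_of_nonneg_left hs1 hc0.le]
  have hcore := main_core ha₁ ht hs1 h2s hK1 hx hz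
  have hδ : (0:ℝ) ≤ L - z := by linarith
  have hsqq : (z - x) ^ 2 ≤ (z + x - 2 * L) ^ 2 := by
    nlinarith [mul_nonneg hδ (sub_nonneg.2 hx)]
  have hnn : 0 ≤ gk (a y * t) (z - x) - gk (a y * t) (z + x - 2 * L) :=
    sub_nonneg.2 (gk_mono hs hsqq)
  rw [abs_of_nonneg hnn]
  have hsqrt_t : 0 < Real.sqrt t := Real.sqrt_pos.2 ht
  have habs : |L - z| = L - z := abs_of_nonneg hδ
  set r := (L - z) / Real.sqrt t with hrdef
  have hr0 : 0 ≤ r := div_nonneg hδ hsqrt_t.le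
  have hrβ : r ^ β = |L - z| ^ β / t ^ (β / 2) := by
    rw [hrdef, Real.div_rpow hδ (Real.sqrt_nonneg t), Real.sqrt_eq_rpow,
      ← Real.rpow_mul ht.le, show (1:ℝ) / 2 * β = β / 2 by ring, habs]
  have hmin : min r 1 ≤ min (|L - z| ^ β / t ^ (β / 2)) 1 := by
    rw [← hrβ]
    rcases le_total r 1 with h | h
    · refine le_min (le_trans (min_le_left _ _) ?_) (min_le_right _ _)
      rcases eq_or_lt_of_le hr0 with h0 | h0
      · rw [← h0]; exact Real.rpow_nonneg le_rfl β
      · calc r = r ^ (1:ℝ) := (Real.rpow_one r).symm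
          _ ≤ r ^ β := Real.rpow_le_rpow_of_exponent_ge h0 h hβ1
    · rw [min_eq_right h, min_eq_right]
      calc (1:ℝ) = r ^ (0:ℝ) := (Real.rpow_zero r).symm
        _ ≤ r ^ β := Real.rpow_le_rpow_of_exponent_le h hβ0
  have hg : 0 ≤ gk ((2 * a₂ + 2) * t) (x - z) := (gk_pos (by positivity) _).le
  set K := Real.sqrt ((2 * a₂ + 2) / a₁) * (2 / a₁ + 2 / Real.sqrt a₁ + 1) with hKdef
  have hK0 : 0 ≤ K := mul_nonneg (Real.sqrt_nonneg _) (by positivity)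
  calc gk (a y * t) (z - x) - gk (a y * t) (z + x - 2 * L)
      ≤ K * min r 1 * gk ((2 * a₂ + 2) * t) (x - z) := hcore
    _ ≤ (K + 1) * min (|L - z| ^ β / t ^ (β / 2)) 1 * gk ((2 * a₂ + 2) * t) (x - z) := by
        apply mul_le_mul_of_nonneg_right _ hg
        exact mul_le_mul (by linarith) hmin (le_min hr0 zero_le_one) (by linarith)
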